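/- For every π ∈ S_∞, the operator ∇ = Σ_{i ≥ 1} ∂/∂x_i applied to the Schubert polynomial S_π gives ∇ S_π = Σ_{i ≥ 1, ℓ(r_i π) = ℓ(π) − 1} i · S_{r_i π}. In particular ∇ takes Schubert polynomials to nonnegative integer combinations of Schubert polynomials. -/

import Mathlib

open MvPolynomial

/-- The simple transposition `r_i = (i, i+1)` of `{1, 2, 3, …}`. -/
def simpleTransposition (i : ℕ+) : Equiv.Perm ℕ+ := Equiv.swap i (i + 1)

/-- A permutation of `{1, 2, 3, …}` moves only finitely many points. -/
def FinitelySupported (π : Equiv.Perm ℕ+) : Prop := {i : ℕ+ | π i ≠ i}.Finite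

/-- The Coxeter length of a finitely supported permutation of `{1, 2, 3, …}`:
the least length of a word in the simple transpositions expressing it. -/
noncomputable def len (π : Equiv.Perm ℕ+) : ℕ :=
  sInf {k : ℕ | ∃ l : List ℕ+, l.length = k ∧ π = (l.map simpleTransposition).prod}

/-- The set of reduced words for `π`. -/
def RW (π : Equiv.Perm ℕ+) : Set (List ℕ+) :=
  {l : List ℕ+ | l.length = len π ∧ π = (l.map simpleTransposition).prod}

/-- `i ↦ n + 1 - i` on `{1, …, n}`, identity elsewhere. -/
def w0fun (n : ℕ) : ℕ+ → ℕ+ :=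
  fun i => if h : (i : ℕ) ≤ n then (⟨n + 1 - (i : ℕ), by omega⟩ : ℕ+) else i

theorem w0fun_involutive (n : ℕ) : Function.Involutive (w0fun n) := by
  intro i
  have hi : 1 ≤ (i : ℕ) := i.2
  have e1 : ∀ j : ℕ+, (j : ℕ) ≤ n → ((w0fun n j : ℕ+) : ℕ) = n + 1 - (j : ℕ) := by
    intro j hj
    have hj' : w0fun n j = (⟨n + 1 - (j : ℕ), by omega⟩ : ℕ+) := dif_pos hj
    rw [hj']
    rfl
  have e2 : ∀ j : ℕ+, ¬ (j : ℕ) ≤ n → w0fun n j = j := by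
    intro j hj
    exact dif_neg hj
  apply PNat.coe_injective
  by_cases h1 : (i : ℕ) ≤ n
  · have h2 : ((w0fun n i : ℕ+) : ℕ) ≤ n := by rw [e1 i h1]; omega
    rw [e1 _ h2, e1 i h1]
    omega
  · rw [e2 i h1, e2 i h1]

/-- The longest element `w₀` of `S_n ⊆ S_∞`, i.e. `i ↦ n + 1 - i` on `{1, …, n}`. -/
def w0 (n : ℕ) : Equiv.Perm ℕ+ := Function.Involutive.toPerm (w0fun n) (w0fun_involutive n)

/-- The property defining Schubert polynomials: `S_{w₀} = x₁^{n-1} x₂^{n-2} ⋯ x_{n-1}`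
for the longest element `w₀` of each `S_n`, together with
`∂_i S_π = S_{π rᵢ}` whenever `ℓ(π rᵢ) = ℓ(π) − 1`, the latter encoded
denominator-free as `(xᵢ − xᵢ₊₁) · S_{π rᵢ} = S_π − sᵢ(S_π)`. -/
def IsSchubertFamily {R : Type*} [CommRing R] (SP : Equiv.Perm ℕ+ → MvPolynomial ℕ+ R) : Prop :=
  (∀ n : ℕ, SP (w0 n)
      = ∏ i ∈ Finset.range n, (X (⟨i + 1, Nat.succ_pos i⟩ : ℕ+) : MvPolynomial ℕ+ R) ^ (n - 1 - i))
  ∧ (∀ π : Equiv.Perm ℕ+, FinitelySupported π → ∀ i : ℕ+,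
      len (π * simpleTransposition i) + 1 = len π →
      (X i - X (i + 1)) * SP (π * simpleTransposition i)
        = SP π - rename (Equiv.swap i (i + 1)) (SP π))

/-- The operator `∇ = Σ_{i ≥ 1} ∂/∂xᵢ` on `ℤ[x₁, x₂, …]`. -/
noncomputable def nabla (f : MvPolynomial ℕ+ ℤ) : MvPolynomial ℕ+ ℤ :=
  ∑ᶠ i : ℕ+, pderiv i f

-- abbreviations
local notation "r" => simpleTransposition

namespace SchubertAux

lemma perm_inv_apply_self (π : Equiv.Perm ℕ+) (x : ℕ+) : π⁻¹ (π x) = x :=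
  Equiv.Perm.inv_eq_iff_eq.mpr rfl

lemma perm_apply_inv_self (π : Equiv.Perm ℕ+) (x : ℕ+) : π (π⁻¹ x) = x :=
  (Equiv.eq_symm_apply π).mp rfl

lemma pnat_add_one_coe (i : ℕ+) : ((i + 1 : ℕ+) : ℕ) = (i : ℕ) + 1 := rfl

lemma pnat_lt_iff {a b : ℕ+} : a < b ↔ (a : ℕ) < (b : ℕ) := Iff.rfl

lemma pnat_eq_iff {a b : ℕ+} : a = b ↔ (a : ℕ) = (b : ℕ) := ⟨congrArg _, fun h => PNat.coe_injective h⟩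

lemma r_apply (i x : ℕ+) : r i x = if x = i then i + 1 else if x = i + 1 then i else x := by
  simp [simpleTransposition, Equiv.swap_apply_def]

lemma pnat_eq_nat {a b : ℕ+} : a = b ↔ (a : ℕ) = (b : ℕ) :=
  ⟨congrArg _, fun h => PNat.coe_injective h⟩

lemma r_coe (i x : ℕ+) : ((r i x : ℕ))
    = if (x : ℕ) = (i : ℕ) then (i : ℕ) + 1
      else if (x : ℕ) = (i : ℕ) + 1 then (i : ℕ) else (x : ℕ) := by
  rw [r_apply]
  by_cases h1 : x = i
  · rw [if_pos h1, if_pos (pnat_eq_nat.mp h1)]; rfl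
  · rw [if_neg h1, if_neg (fun hc => h1 (pnat_eq_nat.mpr hc))]
    by_cases h2 : x = i + 1
    · rw [if_pos h2, if_pos (show (x : ℕ) = (i : ℕ) + 1 from pnat_eq_nat.mp h2)]
    · rw [if_neg h2,
        if_neg (show ¬(x : ℕ) = (i : ℕ) + 1 from fun hc => h2 (pnat_eq_nat.mpr hc))]

/-- `r i` preserves the order of any increasing pair other than `(i, i+1)`. -/
lemma r_lt_r {i a b : ℕ+} (hab : a < b) (hne : ¬(a = i ∧ b = i + 1)) :
    r i a < r i b := by
  have hab' : (a : ℕ) < (b : ℕ) := hab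
  have hne' : ¬((a : ℕ) = (i : ℕ) ∧ (b : ℕ) = (i : ℕ) + 1) := by
    rintro ⟨u, v⟩
    exact hne ⟨pnat_eq_nat.mpr u, pnat_eq_nat.mpr v⟩
  rw [← PNat.coe_lt_coe, r_coe, r_coe]
  split_ifs <;> omega

lemma r_mul_self (i : ℕ+) : r i * r i = 1 := by
  simp [simpleTransposition, Equiv.swap_mul_self]

lemma mul_r_mul_r (π : Equiv.Perm ℕ+) (i : ℕ+) : π * r i * r i = π := by
  rw [mul_assoc, r_mul_self, mul_one]

lemma r_apply_self (i : ℕ+) : r i i = i + 1 := by simp [r_apply]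

lemma r_apply_succ (i : ℕ+) : r i (i + 1) = i := by
  rw [r_apply]; simp only [pnat_eq_iff, pnat_add_one_coe]
  split_ifs <;> omega

lemma r_apply_of_ne {i x : ℕ+} (h1 : x ≠ i) (h2 : x ≠ i + 1) : r i x = x := by
  rw [r_apply, if_neg h1, if_neg h2]

/-- The inversion set. -/
def InvSet (π : Equiv.Perm ℕ+) : Set (ℕ+ × ℕ+) := {p | p.1 < p.2 ∧ π p.2 < π p.1}

noncomputable def invnum (π : Equiv.Perm ℕ+) : ℕ := (InvSet π).ncard

/-- A bound on the support. -/
lemma exists_bound {π : Equiv.Perm ℕ+} (h : FinitelySupported π) :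
    ∃ N : ℕ+, ∀ i : ℕ+, N < i → π i = i := by
  obtain ⟨s, hs⟩ := Set.Finite.exists_finset_coe h
  refine ⟨s.sup id + 1, fun i hi => ?_⟩
  by_contra hne
  have : i ∈ s := by rw [← Finset.mem_coe, hs]; exact hne
  have := Finset.le_sup (f := id) this
  simp only [id] at this
  have hle : i ≤ s.sup id + 1 := le_trans this (by
    rw [← PNat.coe_le_coe, pnat_add_one_coe]; omega)
  exact absurd hi (not_lt_of_ge hle)

lemma apply_le_of_bound {π : Equiv.Perm ℕ+} {N : ℕ+} (hb : ∀ i : ℕ+, N < i → π i = i)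
    {i : ℕ+} (hi : i ≤ N) : π i ≤ N := by
  by_contra h
  push_neg at h
  have := hb (π i) h
  have := π.injective (by rw [this] : π (π i) = π i)
  exact absurd (lt_of_le_of_lt hi h) (by rw [this]; exact lt_irrefl i)

lemma invSet_finite {π : Equiv.Perm ℕ+} (h : FinitelySupported π) : (InvSet π).Finite := by
  obtain ⟨N, hb⟩ := exists_bound h
  apply Set.Finite.subset (Set.finite_Iic (N, N))
  rintro ⟨a, b⟩ ⟨h1, h2⟩
  simp only [Set.mem_Iic, Prod.mk_le_mk]
  by_cases hbN : b ≤ N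
  · exact ⟨le_trans (le_of_lt h1) hbN, hbN⟩
  · exfalso
    push_neg at hbN
    have hπb : π b = b := hb b hbN
    simp only [InvSet, Set.mem_setOf_eq] at h2
    by_cases haN : a ≤ N
    · have hge := apply_le_of_bound hb haN
      rw [hπb] at h2
      exact absurd hbN (not_lt_of_ge (le_of_lt (lt_of_lt_of_le h2 hge)))
    · push_neg at haN
      rw [hπb, hb a haN] at h2
      exact absurd h1 (not_lt_of_gt h2)


lemma pnat_lt_succ (i : ℕ+) : i < i + 1 := Nat.lt_succ_self _

lemma pnat_ne_succ (i : ℕ+) : i ≠ i + 1 := ne_of_lt (pnat_lt_succ i)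

lemma r_r (i x : ℕ+) : r i (r i x) = x := Equiv.swap_apply_self _ _ _

lemma fs_one : FinitelySupported 1 := by
  simp [FinitelySupported]

lemma fs_mul {π σ : Equiv.Perm ℕ+} (h1 : FinitelySupported π) (h2 : FinitelySupported σ) :
    FinitelySupported (π * σ) := by
  apply Set.Finite.subset (h1.union h2)
  intro i hi
  simp only [Set.mem_union, Set.mem_setOf_eq]
  by_contra hc
  push_neg at hc
  exact hi (by simp [Equiv.Perm.mul_apply, hc.2, hc.1])

lemma fs_inv {π : Equiv.Perm ℕ+} (h : FinitelySupported π) : FinitelySupported π⁻¹ := by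
  apply Set.Finite.subset h
  intro i hi
  simp only [Set.mem_setOf_eq] at hi ⊢
  intro hc2
  exact hi (by rw [← hc2, perm_inv_apply_self, hc2])

lemma fs_r (i : ℕ+) : FinitelySupported (r i) := by
  apply Set.Finite.subset ((Set.finite_singleton (i+1)).insert i)
  intro x hx
  simp only [Set.mem_setOf_eq] at hx
  by_contra hc
  simp only [Set.mem_insert_iff, Set.mem_singleton_iff] at hc
  push_neg at hc
  exact hx (r_apply_of_ne hc.1 hc.2)

lemma mem_invSet {π : Equiv.Perm ℕ+} {a b : ℕ+} :
    (a, b) ∈ InvSet π ↔ a < b ∧ π b < π a := Iff.rfl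

lemma invSet_mul_r_diff (π : Equiv.Perm ℕ+) (i : ℕ+) :
    InvSet π \ {(i, i + 1)} = (fun p : ℕ+ × ℕ+ => (r i p.1, r i p.2)) ''
      (InvSet (π * r i) \ {(i, i + 1)}) := by
  ext ⟨a, b⟩
  simp only [Set.mem_diff, Set.mem_image, Set.mem_singleton_iff, Prod.mk.injEq, Prod.exists]
  constructor
  · rintro ⟨⟨hab, hinv⟩, hne⟩
    refine ⟨r i a, r i b, ⟨⟨?_, ?_⟩, ?_⟩, r_r i a, r_r i b⟩
    · exact r_lt_r hab (fun ⟨u, v⟩ => hne (by rw [u, v]; exact ⟨rfl, rfl⟩))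
    · show π (r i (r i b)) < π (r i (r i a))
      rw [r_r, r_r]; exact hinv
    · rintro ⟨u, v⟩
      have ha : a = i + 1 := by rw [← r_r i a, u, r_apply_self]
      have hb : b = i := by rw [← r_r i b, v, r_apply_succ]
      have hab2 : (a, b).1 < (a, b).2 := hab
      simp only [ha, hb] at hab2
      exact absurd (lt_trans hab2 (pnat_lt_succ i)) (lt_irrefl _)
  · rintro ⟨c, d, ⟨⟨hcd, hinv⟩, hne⟩, hc, hd⟩
    subst hc; subst hd
    have hord : r i c < r i d := r_lt_r hcd (fun ⟨u, v⟩ => hne (by rw [u, v]; exact ⟨rfl, rfl⟩))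
    refine ⟨⟨hord, ?_⟩, ?_⟩
    · have h1 : (π * r i) d = π (r i d) := rfl
      have h2 : (π * r i) c = π (r i c) := rfl
      rw [h1, h2] at hinv
      exact hinv
    · rintro ⟨u, v⟩
      have : c = i + 1 := by rw [← r_r i c, u, r_apply_self]
      have hd2 : d = i := by rw [← r_r i d, v, r_apply_succ]
      rw [this, hd2] at hcd
      exact absurd (lt_trans hcd (pnat_lt_succ i)) (lt_irrefl _)

lemma pair_mem_mul_r {π : Equiv.Perm ℕ+} {i : ℕ+} :
    (i, i + 1) ∈ InvSet (π * r i) ↔ π i < π (i + 1) := by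
  rw [mem_invSet]
  constructor
  · rintro ⟨-, h⟩
    have h1 : (π * r i) (i + 1) = π i := by
      show π (r i (i + 1)) = π i; rw [r_apply_succ]
    have h2 : (π * r i) i = π (i + 1) := by
      show π (r i i) = π (i + 1); rw [r_apply_self]
    rw [h1, h2] at h; exact h
  · intro h
    refine ⟨pnat_lt_succ i, ?_⟩
    show π (r i (i + 1)) < π (r i i)
    rw [r_apply_succ, r_apply_self]; exact h

lemma pair_mem {π : Equiv.Perm ℕ+} {i : ℕ+} :
    (i, i + 1) ∈ InvSet π ↔ π (i + 1) < π i := by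
  rw [mem_invSet]
  exact ⟨fun h => h.2, fun h => ⟨pnat_lt_succ i, h⟩⟩

lemma rr_injOn {i : ℕ+} {S : Set (ℕ+ × ℕ+)} :
    Set.InjOn (fun p : ℕ+ × ℕ+ => (r i p.1, r i p.2)) S := by
  rintro ⟨a, b⟩ - ⟨c, d⟩ - h
  simp only [Prod.mk.injEq] at h
  have h1 := congrArg (r i) h.1
  have h2 := congrArg (r i) h.2
  rw [r_r, r_r] at h1 h2
  rw [h1, h2]

lemma ncard_diff_eq (π : Equiv.Perm ℕ+) (i : ℕ+) :
    (InvSet π \ {(i, i + 1)}).ncard = (InvSet (π * r i) \ {(i, i + 1)}).ncard := by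
  rw [invSet_mul_r_diff π i]
  exact Set.ncard_image_of_injOn rr_injOn

lemma invnum_mul_r_asc {π : Equiv.Perm ℕ+} (hfs : FinitelySupported π) {i : ℕ+}
    (h : π i < π (i + 1)) : invnum (π * r i) = invnum π + 1 := by
  have hfsA : FinitelySupported (π * r i) := fs_mul hfs (fs_r i)
  have hA := invSet_finite hfsA
  have hB := invSet_finite hfs
  have hqA : (i, i + 1) ∈ InvSet (π * r i) := pair_mem_mul_r.mpr h
  have hqB : (i, i + 1) ∉ InvSet π := by
    rw [pair_mem]; exact not_lt_of_gt h
  have e1 : (InvSet (π * r i) \ {(i, i + 1)}).ncard + 1 = (InvSet (π * r i)).ncard :=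
    Set.ncard_diff_singleton_add_one hqA hA
  have e2 : InvSet π \ {(i, i + 1)} = InvSet π := by
    rw [Set.diff_singleton_eq_self hqB]
  have := ncard_diff_eq π i
  rw [e2] at this
  show (InvSet (π * r i)).ncard = (InvSet π).ncard + 1
  omega

lemma invnum_mul_r_desc {π : Equiv.Perm ℕ+} (hfs : FinitelySupported π) {i : ℕ+}
    (h : π (i + 1) < π i) : invnum (π * r i) + 1 = invnum π := by
  have hfsA : FinitelySupported (π * r i) := fs_mul hfs (fs_r i)
  have hA := invSet_finite hfsA
  have hB := invSet_finite hfs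
  have hqB : (i, i + 1) ∈ InvSet π := pair_mem.mpr h
  have hqA : (i, i + 1) ∉ InvSet (π * r i) := by
    rw [pair_mem_mul_r]; exact not_lt_of_gt h
  have e1 : (InvSet π \ {(i, i + 1)}).ncard + 1 = (InvSet π).ncard :=
    Set.ncard_diff_singleton_add_one hqB hB
  have e2 : InvSet (π * r i) \ {(i, i + 1)} = InvSet (π * r i) := by
    rw [Set.diff_singleton_eq_self hqA]
  have := ncard_diff_eq π i
  rw [e2] at this
  show (InvSet (π * r i)).ncard + 1 = (InvSet π).ncard
  omega

lemma invnum_inv (π : Equiv.Perm ℕ+) : invnum π⁻¹ = invnum π := by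
  have himg : InvSet π⁻¹ = (fun p : ℕ+ × ℕ+ => (π p.2, π p.1)) '' InvSet π := by
    ext ⟨c, d⟩
    simp only [Set.mem_image, Prod.exists, mem_invSet, Prod.mk.injEq]
    constructor
    · rintro ⟨hcd, hinv⟩
      exact ⟨π⁻¹ d, π⁻¹ c, ⟨hinv, by simp [hcd]⟩, by simp, by simp⟩
    · rintro ⟨a, b, ⟨hab, hinv⟩, hc, hd⟩
      subst hc; subst hd
      exact ⟨hinv, by simp [hab]⟩
  unfold invnum
  rw [himg, Set.ncard_image_of_injOn]
  rintro ⟨a, b⟩ - ⟨c, d⟩ - h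
  simp only [Prod.mk.injEq] at h
  have h1 := π.injective h.1
  have h2 := π.injective h.2
  rw [h1, h2]


lemma eq_one_of_invSet_empty {π : Equiv.Perm ℕ+} (hfs : FinitelySupported π)
    (h : InvSet π = ∅) : π = 1 := by
  by_contra hne
  have hsupp : hfs.toFinset.Nonempty := by
    refine (Set.Finite.toFinset_nonempty (hs := hfs)).mpr ?_
    by_contra hc
    rw [Set.not_nonempty_iff_eq_empty] at hc
    apply hne
    ext a
    have : a ∉ ({i : ℕ+ | π i ≠ i} : Set ℕ+) := by rw [hc]; exact Set.notMem_empty a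
    simpa using this
  set m := hfs.toFinset.min' hsupp with hm
  have hmem : π m ≠ m := by
    have := hfs.toFinset.min'_mem hsupp
    exact (Set.Finite.mem_toFinset (hs := hfs)).mp this
  have hfix : ∀ a : ℕ+, a < m → π a = a := by
    intro a ha
    by_contra hc
    have : a ∈ hfs.toFinset := (Set.Finite.mem_toFinset (hs := hfs)).mpr hc
    exact absurd ha (not_lt_of_ge (hfs.toFinset.min'_le a this))
  have h1 : m < π m := by
    rcases lt_trichotomy (π m) m with hlt | heq | hgt
    · exact absurd (π.injective (hfix (π m) hlt)) hmem
    · exact absurd heq hmem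
    · exact hgt
  have h2 : m < π⁻¹ m := by
    rcases lt_trichotomy (π⁻¹ m) m with hlt | heq | hgt
    · have := hfix (π⁻¹ m) hlt
      rw [perm_apply_inv_self] at this
      rw [← this] at hlt
      exact absurd hlt (lt_irrefl _)
    · rw [← heq] at hmem
      rw [perm_apply_inv_self] at hmem
      exact absurd heq.symm hmem
    · exact hgt
  have : (m, π⁻¹ m) ∈ InvSet π := by
    rw [mem_invSet, perm_apply_inv_self]
    exact ⟨h2, h1⟩
  rw [h] at this
  exact Set.notMem_empty _ this

lemma invnum_one : invnum 1 = 0 := by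
  have : InvSet (1 : Equiv.Perm ℕ+) = ∅ := by
    ext ⟨a, b⟩
    simp only [mem_invSet, Set.mem_empty_iff_false, iff_false, not_and]
    intro hab
    show ¬ b < a
    exact not_lt_of_gt hab
  rw [invnum, this, Set.ncard_empty]

lemma exists_descent {π : Equiv.Perm ℕ+} (hfs : FinitelySupported π) (hne : π ≠ 1) :
    ∃ i : ℕ+, π (i + 1) < π i := by
  by_contra hc
  push_neg at hc
  have hasc : ∀ i : ℕ+, π i < π (i + 1) := by
    intro i
    rcases lt_or_eq_of_le (hc i) with h | h
    · exact h
    · exact absurd (π.injective h) (pnat_ne_succ i)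
  have key : ∀ (k : ℕ) (a b : ℕ+), (b : ℕ) = (a : ℕ) + k + 1 → π a < π b := by
    intro k
    induction k with
    | zero =>
      intro a b hb
      have : b = a + 1 := pnat_eq_nat.mpr (by rw [hb]; rfl)
      rw [this]; exact hasc a
    | succ n ih =>
      intro a b hb
      exact lt_trans (hasc a) (ih (a + 1) b (by rw [hb, pnat_add_one_coe]; omega))
  apply absurd (eq_one_of_invSet_empty hfs _) hne
  ext ⟨a, b⟩
  simp only [mem_invSet, Set.mem_empty_iff_false, iff_false, not_and]
  intro hab
  have hab' : (a : ℕ) < (b : ℕ) := hab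
  have := key ((b : ℕ) - (a : ℕ) - 1) a b (by omega)
  exact not_lt_of_gt this

lemma prod_fs (l : List ℕ+) : FinitelySupported ((l.map r).prod) := by
  induction l with
  | nil => simpa using fs_one
  | cons x t ih =>
    rw [List.map_cons, List.prod_cons]
    exact fs_mul (fs_r x) ih

lemma invnum_word_le (l : List ℕ+) : invnum ((l.map r).prod) ≤ l.length := by
  induction l using List.reverseRecOn with
  | nil => simpa using le_of_eq invnum_one
  | append_singleton t x ih =>
    rw [List.map_append, List.prod_append, List.map_singleton, List.prod_singleton,
      List.length_append, List.length_singleton]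
    set σ := (t.map r).prod with hσ
    have hfs : FinitelySupported σ := prod_fs t
    rcases lt_trichotomy (σ x) (σ (x + 1)) with h | h | h
    · rw [invnum_mul_r_asc hfs h]; omega
    · exact absurd (σ.injective h) (pnat_ne_succ x)
    · have := invnum_mul_r_desc hfs h; omega

lemma exists_word_aux : ∀ (n : ℕ) (π : Equiv.Perm ℕ+), FinitelySupported π → invnum π = n →
    ∃ l : List ℕ+, l.length = invnum π ∧ π = (l.map r).prod := by
  intro n
  induction n using Nat.strong_induction_on with
  | _ n ih =>
    intro π hfs hn
    by_cases hπ : π = 1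
    · refine ⟨[], ?_, by simp [hπ]⟩
      rw [hπ, invnum_one]; rfl
    · obtain ⟨i, hi⟩ := exists_descent hfs hπ
      have hdesc := invnum_mul_r_desc hfs hi
      have hfs' : FinitelySupported (π * r i) := fs_mul hfs (fs_r i)
      obtain ⟨l', hl1, hl2⟩ := ih (invnum (π * r i)) (by omega) (π * r i) hfs' rfl
      refine ⟨l' ++ [i], ?_, ?_⟩
      · rw [List.length_append, List.length_singleton, hl1]; omega
      · rw [List.map_append, List.prod_append, List.map_singleton, List.prod_singleton, ← hl2,
          mul_r_mul_r]

lemma exists_word {π : Equiv.Perm ℕ+} (hfs : FinitelySupported π) :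
    ∃ l : List ℕ+, l.length = invnum π ∧ π = (l.map r).prod :=
  exists_word_aux (invnum π) π hfs rfl

lemma len_eq_invnum {π : Equiv.Perm ℕ+} (hfs : FinitelySupported π) : len π = invnum π := by
  obtain ⟨l, hl1, hl2⟩ := exists_word hfs
  have hmem : invnum π ∈ {k : ℕ | ∃ l : List ℕ+,
      l.length = k ∧ π = (l.map simpleTransposition).prod} := ⟨l, hl1, hl2⟩
  apply le_antisymm
  · exact Nat.sInf_le hmem
  · apply le_csInf ⟨invnum π, hmem⟩
    rintro k ⟨l', hl1', hl2'⟩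
    rw [hl2', ← hl1']
    exact invnum_word_le l'

lemma len_mul_r_desc {π : Equiv.Perm ℕ+} (hfs : FinitelySupported π) {i : ℕ+}
    (h : π (i + 1) < π i) : len (π * r i) + 1 = len π := by
  rw [len_eq_invnum hfs, len_eq_invnum (fs_mul hfs (fs_r i))]
  exact invnum_mul_r_desc hfs h

lemma len_mul_r_asc {π : Equiv.Perm ℕ+} (hfs : FinitelySupported π) {i : ℕ+}
    (h : π i < π (i + 1)) : len (π * r i) = len π + 1 := by
  rw [len_eq_invnum hfs, len_eq_invnum (fs_mul hfs (fs_r i))]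
  exact invnum_mul_r_asc hfs h

lemma len_mul_r_desc_iff {π : Equiv.Perm ℕ+} (hfs : FinitelySupported π) {i : ℕ+} :
    len (π * r i) + 1 = len π ↔ π (i + 1) < π i := by
  constructor
  · intro h
    rcases lt_trichotomy (π i) (π (i + 1)) with hlt | heq | hgt
    · have := len_mul_r_asc hfs hlt; omega
    · exact absurd (π.injective heq) (pnat_ne_succ i)
    · exact hgt
  · exact len_mul_r_desc hfs

lemma r_inv (i : ℕ+) : (r i)⁻¹ = r i := by
  rw [eq_comm, eq_inv_iff_mul_eq_one, r_mul_self]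

lemma len_r_mul_eq (π : Equiv.Perm ℕ+) (i : ℕ+) (hfs : FinitelySupported π) :
    len (r i * π) = len (π⁻¹ * r i) := by
  have h1 : FinitelySupported (r i * π) := fs_mul (fs_r i) hfs
  have h2 : FinitelySupported (π⁻¹ * r i) := fs_mul (fs_inv hfs) (fs_r i)
  rw [len_eq_invnum h1, len_eq_invnum h2]
  have : π⁻¹ * r i = (r i * π)⁻¹ := by rw [mul_inv_rev, r_inv]
  rw [this, invnum_inv]

lemma len_r_mul_desc_iff {π : Equiv.Perm ℕ+} (hfs : FinitelySupported π) {i : ℕ+} :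
    len (r i * π) + 1 = len π ↔ π⁻¹ (i + 1) < π⁻¹ i := by
  rw [len_r_mul_eq π i hfs]
  have : len π = len π⁻¹ := by
    rw [len_eq_invnum hfs, len_eq_invnum (fs_inv hfs), invnum_inv]
  rw [this]
  exact len_mul_r_desc_iff (fs_inv hfs)


/-! ### Permutations supported in a box -/

def SuppIn (n : ℕ) (π : Equiv.Perm ℕ+) : Prop := ∀ i : ℕ+, n < (i : ℕ) → π i = i

lemma suppIn_fs {n : ℕ} {π : Equiv.Perm ℕ+} (h : SuppIn n π) : FinitelySupported π := by
  apply Set.Finite.subset (Set.finite_Iic (⟨n + 1, Nat.succ_pos n⟩ : ℕ+))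
  intro i hi
  have hi' : π i ≠ i := hi
  rw [Set.mem_Iic]
  by_contra hc
  rw [not_le] at hc
  have hc' : ((⟨n + 1, Nat.succ_pos n⟩ : ℕ+) : ℕ) < (i : ℕ) := hc
  have hc2 : n + 1 < (i : ℕ) := hc'
  exact hi' (h i (lt_trans (Nat.lt_succ_self n) hc2))

lemma suppIn_box {n : ℕ} {π : Equiv.Perm ℕ+} (h : SuppIn n π) {i : ℕ+} (hi : (i : ℕ) ≤ n) :
    ((π i : ℕ)) ≤ n := by
  by_contra hc
  push_neg at hc
  have := h (π i) hc
  have := π.injective this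
  rw [this] at hc
  omega

lemma suppIn_mul_r {n : ℕ} {π : Equiv.Perm ℕ+} (h : SuppIn n π) {i : ℕ+}
    (hi : (i : ℕ) < n) : SuppIn n (π * r i) := by
  intro j hj
  have h1 : j ≠ i := by
    intro hc; rw [hc] at hj; omega
  have h2 : j ≠ i + 1 := by
    intro hc
    rw [hc] at hj
    rw [pnat_add_one_coe] at hj
    omega
  show π (r i j) = j
  rw [r_apply_of_ne h1 h2]
  exact h j hj

lemma w0_coe (n : ℕ) (x : ℕ+) :
    ((w0 n x : ℕ)) = if (x : ℕ) ≤ n then n + 1 - (x : ℕ) else (x : ℕ) := by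
  show ((w0fun n x : ℕ)) = _
  unfold w0fun
  by_cases h : (x : ℕ) ≤ n
  · rw [if_pos h]; exact congrArg PNat.val (show w0fun n x = (⟨n + 1 - (x : ℕ), by omega⟩ : ℕ+) from dif_pos h)
  · rw [if_neg h]; exact congrArg PNat.val (show w0fun n x = x from dif_neg h)

lemma suppIn_w0 (n : ℕ) : SuppIn n (w0 n) := by
  intro i hi
  apply pnat_eq_nat.mpr
  rw [w0_coe]
  rw [if_neg (by omega)]

lemma w0_mul_self (n : ℕ) : w0 n * w0 n = 1 := by
  ext x
  show w0 n (w0 n x) = x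
  exact w0fun_involutive n x

lemma w0_inv (n : ℕ) : (w0 n)⁻¹ = w0 n := by
  rw [eq_comm, eq_inv_iff_mul_eq_one, w0_mul_self]

lemma invSet_box {n : ℕ} {π : Equiv.Perm ℕ+} (h : SuppIn n π) {a b : ℕ+}
    (hmem : (a, b) ∈ InvSet π) : a < b ∧ (b : ℕ) ≤ n := by
  obtain ⟨hab, hinv⟩ := hmem
  refine ⟨hab, ?_⟩
  by_contra hc
  push_neg at hc
  have hπb : π b = b := h b (by omega)
  by_cases haN : (a : ℕ) ≤ n
  · have hge := suppIn_box h haN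
    rw [hπb] at hinv
    have : (b : ℕ) < (π a : ℕ) := hinv
    omega
  · push_neg at haN
    rw [hπb, h a (by omega)] at hinv
    exact absurd hab (not_lt_of_gt hinv)

lemma box_subset_w0 {n : ℕ} {a b : ℕ+} (hab : a < b) (hb : (b : ℕ) ≤ n) :
    (a, b) ∈ InvSet (w0 n) := by
  refine ⟨hab, ?_⟩
  have hab' : (a : ℕ) < (b : ℕ) := hab
  show ((w0 n b : ℕ)) < ((w0 n a : ℕ))
  rw [w0_coe, w0_coe, if_pos hb, if_pos (by omega)]
  have := a.2
  omega

lemma invnum_le_w0 {n : ℕ} {π : Equiv.Perm ℕ+} (h : SuppIn n π) :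
    invnum π ≤ invnum (w0 n) := by
  apply Set.ncard_le_ncard _ (invSet_finite (suppIn_fs (suppIn_w0 n)))
  rintro ⟨a, b⟩ hmem
  obtain ⟨hab, hb⟩ := invSet_box h hmem
  exact box_subset_w0 hab hb

/-- If `π` is supported in `[1, n]` and has no ascent inside the box, then `π = w0 n`. -/
lemma eq_w0_of_no_asc {n : ℕ} {π : Equiv.Perm ℕ+} (h : SuppIn n π)
    (hna : ¬∃ i : ℕ+, (i : ℕ) < n ∧ π i < π (i + 1)) : π = w0 n := by
  push_neg at hna
  -- π is strictly decreasing on the box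
  have hadj : ∀ i : ℕ+, (i : ℕ) < n → π (i + 1) < π i := by
    intro i hi
    rcases lt_trichotomy (π i) (π (i + 1)) with hlt | heq | hgt
    · exact absurd hlt (not_lt_of_ge (hna i hi))
    · exact absurd (π.injective heq) (pnat_ne_succ i)
    · exact hgt
  have hdec : ∀ (k : ℕ) (a b : ℕ+), (b : ℕ) = (a : ℕ) + k + 1 → (b : ℕ) ≤ n → π b < π a := by
    intro k
    induction k with
    | zero =>
      intro a b hb hbn
      have : b = a + 1 := pnat_eq_nat.mpr (by rw [hb]; rfl)
      rw [this]
      exact hadj a (by omega)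
    | succ m ih =>
      intro a b hb hbn
      have h1 : π (a + 1) < π a := hadj a (by omega)
      have h2 : π b < π (a + 1) := ih (a + 1) b (by rw [hb, pnat_add_one_coe]; omega) hbn
      exact lt_trans h2 h1
  -- hence π * w0 n has no inversions
  have hτ : π * w0 n = 1 := by
    apply eq_one_of_invSet_empty (fs_mul (suppIn_fs h) (suppIn_fs (suppIn_w0 n)))
    ext ⟨a, b⟩
    simp only [mem_invSet, Set.mem_empty_iff_false, iff_false, not_and]
    intro hab
    have hab' : (a : ℕ) < (b : ℕ) := hab
    have ha1 : 1 ≤ (a : ℕ) := a.2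
    show ¬ π (w0 n b) < π (w0 n a)
    by_cases hbn : (b : ℕ) ≤ n
    · -- both a and b in box
      have han : (a : ℕ) ≤ n := by omega
      have hwa : ((w0 n a : ℕ)) = n + 1 - (a : ℕ) := by rw [w0_coe, if_pos han]
      have hwb : ((w0 n b : ℕ)) = n + 1 - (b : ℕ) := by rw [w0_coe, if_pos hbn]
      have : π (w0 n a) < π (w0 n b) := by
        apply hdec ((w0 n a : ℕ) - (w0 n b : ℕ) - 1) (w0 n b) (w0 n a) (by omega) (by omega)
      exact not_lt_of_gt this
    · push_neg at hbn
      have hwb : w0 n b = b := suppIn_w0 n b (by omega)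
      have hπb : π (w0 n b) = b := by rw [hwb]; exact h b (by omega)
      rw [hπb]
      by_cases han : (a : ℕ) ≤ n
      · have hwa : ((w0 n a : ℕ)) ≤ n := suppIn_box (suppIn_w0 n) han
        have := suppIn_box h hwa
        intro hcon
        have : (b : ℕ) < ((π (w0 n a)) : ℕ) := hcon
        omega
      · push_neg at han
        have hwa : w0 n a = a := suppIn_w0 n a (by omega)
        rw [hwa, h a (by omega)]
        exact not_lt_of_gt hab
  calc π = π * w0 n * w0 n := by rw [mul_assoc, w0_mul_self, mul_one]
  _ = w0 n := by rw [hτ, one_mul]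


/-! ### Properties of nabla -/

lemma pderiv_support_finite (f : MvPolynomial ℕ+ ℤ) :
    (Function.support fun i => pderiv i f).Finite := by
  apply Set.Finite.subset f.vars.finite_toSet
  intro i hi
  rw [Function.mem_support] at hi
  by_contra hc
  exact hi (pderiv_eq_zero_of_notMem_vars hc)

lemma nabla_sub (f g : MvPolynomial ℕ+ ℤ) : nabla (f - g) = nabla f - nabla g := by
  unfold nabla
  rw [← finsum_sub_distrib (pderiv_support_finite f) (pderiv_support_finite g)]
  apply finsum_congr
  intro i
  exact map_sub _ f g

lemma nabla_X (k : ℕ+) : nabla (X k : MvPolynomial ℕ+ ℤ) = 1 := by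
  unfold nabla
  rw [finsum_eq_single _ k (fun x hx => pderiv_X_of_ne (Ne.symm hx))]
  exact pderiv_X_self k

lemma nabla_mul (f g : MvPolynomial ℕ+ ℤ) : nabla (f * g) = nabla f * g + f * nabla g := by
  unfold nabla
  have h1 : (Function.support fun i => pderiv i f * g).Finite :=
    Set.Finite.subset (pderiv_support_finite f) (fun i hi => by
      rw [Function.mem_support] at hi ⊢
      intro hc; exact hi (by rw [hc, zero_mul]))
  have h2 : (Function.support fun i => f * pderiv i g).Finite :=
    Set.Finite.subset (pderiv_support_finite g) (fun i hi => by
      rw [Function.mem_support] at hi ⊢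
      intro hc; exact hi (by rw [hc, mul_zero]))
  calc (∑ᶠ i : ℕ+, pderiv i (f * g)) = ∑ᶠ i : ℕ+, (pderiv i f * g + f * pderiv i g) := by
        apply finsum_congr; intro i; exact pderiv_mul
  _ = (∑ᶠ i : ℕ+, pderiv i f * g) + ∑ᶠ i : ℕ+, f * pderiv i g := finsum_add_distrib h1 h2
  _ = (∑ᶠ i : ℕ+, pderiv i f) * g + f * ∑ᶠ i : ℕ+, pderiv i g := by
        rw [finsum_mul _ g, mul_finsum _ _]

lemma nabla_Xsub_mul (a b : ℕ+) (g : MvPolynomial ℕ+ ℤ) :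
    nabla ((X a - X b) * g) = (X a - X b) * nabla g := by
  rw [nabla_mul, nabla_sub, nabla_X, nabla_X, sub_self, zero_mul, zero_add]

lemma nabla_rename (e : Equiv.Perm ℕ+) (f : MvPolynomial ℕ+ ℤ) :
    nabla (rename (e : ℕ+ → ℕ+) f) = rename (e : ℕ+ → ℕ+) (nabla f) := by
  unfold nabla
  have h1 : (∑ᶠ j : ℕ+, pderiv j (rename (e : ℕ+ → ℕ+) f))
      = ∑ᶠ i : ℕ+, pderiv (e i) (rename (e : ℕ+ → ℕ+) f) :=
    (finsum_comp_equiv e (f := fun j => pderiv j (rename (e : ℕ+ → ℕ+) f))).symm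
  rw [h1]
  have h2 : ∀ i : ℕ+, pderiv (e i) (rename (e : ℕ+ → ℕ+) f)
      = rename (e : ℕ+ → ℕ+) (pderiv i f) := fun i => pderiv_rename e.injective i f
  rw [finsum_congr h2]
  exact (AddMonoidHom.map_finsum
    (AddMonoidHom.mk' (fun p => rename (e : ℕ+ → ℕ+) p) (fun a b => map_add (rename (R := ℤ) (e : ℕ+ → ℕ+)) a b))
    (pderiv_support_finite f)).symm

lemma swap_comp_swap (i : ℕ+) :
    ((Equiv.swap i (i + 1) : ℕ+ → ℕ+) ∘ (Equiv.swap i (i + 1) : ℕ+ → ℕ+)) = id := by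
  funext x
  exact Equiv.swap_apply_self _ _ _

lemma rename_swap_swap (i : ℕ+) (f : MvPolynomial ℕ+ ℤ) :
    rename (Equiv.swap i (i + 1) : ℕ+ → ℕ+) (rename (Equiv.swap i (i + 1) : ℕ+ → ℕ+) f) = f := by
  rw [rename_rename, swap_comp_swap, rename_id, AlgHom.id_apply]


/-! ### Consequences of the Schubert axioms -/

lemma X_sub_ne (i : ℕ+) : (X i - X (i + 1) : MvPolynomial ℕ+ ℤ) ≠ 0 := by
  intro h
  have := congrArg (eval (fun j : ℕ+ => if j = i then (1 : ℤ) else 0)) h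
  rw [map_sub, eval_X, eval_X, if_pos rfl, if_neg (Ne.symm (pnat_ne_succ i))] at this
  simp at this

section SchubertLemmas

variable (SP : Equiv.Perm ℕ+ → MvPolynomial ℕ+ ℤ)
variable (hrec : ∀ π : Equiv.Perm ℕ+, FinitelySupported π → ∀ i : ℕ+,
      len (π * simpleTransposition i) + 1 = len π →
      (X i - X (i + 1)) * SP (π * simpleTransposition i)
        = SP π - rename (Equiv.swap i (i + 1) : ℕ+ → ℕ+) (SP π))

include hrec

lemma SP_unique {π : Equiv.Perm ℕ+} (hfs : FinitelySupported π) {i : ℕ+}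
    (hdesc : len (π * r i) + 1 = len π) {g : MvPolynomial ℕ+ ℤ}
    (hg : (X i - X (i + 1)) * g = SP π - rename (Equiv.swap i (i + 1) : ℕ+ → ℕ+) (SP π)) :
    SP (π * r i) = g := by
  apply mul_left_cancel₀ (X_sub_ne i)
  rw [hg]
  exact hrec π hfs i hdesc

lemma asc_invariant {π : Equiv.Perm ℕ+} (hfs : FinitelySupported π) {i : ℕ+}
    (hasc : π i < π (i + 1)) :
    rename (Equiv.swap i (i + 1) : ℕ+ → ℕ+) (SP π) = SP π := by
  set π' := π * r i with hπ'
  have hfs' : FinitelySupported π' := fs_mul hfs (fs_r i)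
  have hdesc : π' (i + 1) < π' i := by
    show π (r i (i + 1)) < π (r i i)
    rw [r_apply_succ, r_apply_self]
    exact hasc
  have hlen : len (π' * r i) + 1 = len π' := len_mul_r_desc hfs' hdesc
  have heq := hrec π' hfs' i hlen
  rw [hπ', mul_r_mul_r] at heq
  -- heq : (X i - X (i+1)) * SP π = SP π' - s (SP π')
  have heq2 := congrArg (rename (Equiv.swap i (i + 1) : ℕ+ → ℕ+)) heq
  rw [map_mul, map_sub, map_sub, rename_X, rename_X, rename_swap_swap,
    Equiv.swap_apply_left, Equiv.swap_apply_right] at heq2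
  -- heq2 : (X (i+1) - X i) * s (SP π) = s (SP π') - SP π'
  have hsum : (X i - X (i + 1)) *
      (SP π - rename (Equiv.swap i (i + 1) : ℕ+ → ℕ+) (SP π)) = 0 := by
    have : (X (i + 1) - X i : MvPolynomial ℕ+ ℤ)
        = -(X i - X (i + 1)) := by ring
    rw [this] at heq2
    rw [mul_sub, heq]
    rw [neg_mul] at heq2
    rw [show (X i - X (i + 1)) * rename (Equiv.swap i (i + 1) : ℕ+ → ℕ+) (SP π)
      = -(-((X i - X (i + 1)) * rename (Equiv.swap i (i + 1) : ℕ+ → ℕ+) (SP π))) by ring,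
      heq2]
    ring
  rcases mul_eq_zero.mp hsum with h | h
  · exact absurd h (X_sub_ne i)
  · rw [sub_eq_zero] at h
    exact h.symm

end SchubertLemmas


/-! ### The staircase monomial -/

noncomputable def dvec (n : ℕ) : ℕ+ →₀ ℕ :=
  ∑ m ∈ Finset.range n, Finsupp.single (⟨m + 1, Nat.succ_pos m⟩ : ℕ+) (n - 1 - m)

lemma dvec_apply (n : ℕ) (k : ℕ+) : dvec n k = n - (k : ℕ) := by
  unfold dvec
  rw [Finsupp.finset_sum_apply]
  have hterm : ∀ m ∈ Finset.range n,
      Finsupp.single (⟨m + 1, Nat.succ_pos m⟩ : ℕ+) (n - 1 - m) k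
        = if m = (k : ℕ) - 1 ∧ (k : ℕ) ≤ n then n - 1 - m else 0 := by
    intro m hm
    rw [Finset.mem_range] at hm
    erw [@Finsupp.single_apply ℕ+ ℕ _ (⟨m + 1, Nat.succ_pos m⟩ : ℕ+) k (n - 1 - m) (Classical.dec _)]
    have h1 : 1 ≤ (k : ℕ) := k.2
    by_cases h : (⟨m + 1, Nat.succ_pos m⟩ : ℕ+) = k
    · erw [if_pos h]
      have : m + 1 = (k : ℕ) := pnat_eq_nat.mp h
      rw [if_pos ⟨by omega, by omega⟩]
    · erw [if_neg h]; rw [if_neg]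
      rintro ⟨h2, h3⟩
      exact h (pnat_eq_nat.mpr (by show m + 1 = (k : ℕ); omega))
  trans (∑ m ∈ Finset.range n, if m = (k : ℕ) - 1 ∧ (k : ℕ) ≤ n then n - 1 - m else 0)
  · exact Finset.sum_congr rfl hterm
  have h1 : 1 ≤ (k : ℕ) := k.2
  by_cases hk : (k : ℕ) ≤ n
  · rw [Finset.sum_eq_single ((k : ℕ) - 1)]
    · rw [if_pos ⟨rfl, hk⟩]; omega
    · intro m hm hne
      rw [if_neg (fun hc => hne hc.1)]
    · intro hc
      rw [Finset.mem_range] at hc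
      omega
  · rw [Finset.sum_eq_zero, eq_comm]
    · omega
    · intro m hm
      rw [Finset.mem_range] at hm
      rw [if_neg (fun hc => hk hc.2)]

lemma prod_monomial {α : Type*} (s : Finset α) (g : α → (ℕ+ →₀ ℕ)) :
    (∏ i ∈ s, monomial (g i) (1 : ℤ)) = monomial (∑ i ∈ s, g i) (1 : ℤ) := by
  induction s using Finset.cons_induction with
  | empty => simp [monomial_zero']
  | cons a s ha ih =>
    rw [Finset.prod_cons, Finset.sum_cons, ih, monomial_mul, one_mul]

lemma staircase_eq_monomial (n : ℕ) :
    (∏ i ∈ Finset.range n, (X (⟨i + 1, Nat.succ_pos i⟩ : ℕ+) : MvPolynomial ℕ+ ℤ) ^ (n - 1 - i))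
      = monomial (dvec n) 1 := by
  trans (∏ i ∈ Finset.range n,
      monomial (Finsupp.single (⟨i + 1, Nat.succ_pos i⟩ : ℕ+) (n - 1 - i)) (1 : ℤ))
  · apply Finset.prod_congr rfl
    intro i hi
    exact X_pow_eq_monomial
  exact prod_monomial (Finset.range n) (fun i => Finsupp.single (⟨i + 1, Nat.succ_pos i⟩ : ℕ+) (n - 1 - i))


noncomputable def Bmon (n : ℕ) (k : ℕ+) : MvPolynomial ℕ+ ℤ :=
  monomial (dvec n - Finsupp.single k 1) 1

def pmk (m : ℕ) : ℕ+ := ⟨m + 1, Nat.succ_pos m⟩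

noncomputable def Tn (n : ℕ) : Finset ℕ+ := (Finset.range (n - 1)).image pmk

lemma pmk_coe (m : ℕ) : ((pmk m : ℕ)) = m + 1 := rfl

lemma pmk_inj : Function.Injective pmk := by
  intro a b h
  have : a + 1 = b + 1 := pnat_eq_nat.mp h
  omega

lemma mem_Tn {n : ℕ} {k : ℕ+} : k ∈ Tn n ↔ (k : ℕ) < n := by
  unfold Tn
  rw [Finset.mem_image]
  constructor
  · rintro ⟨m, hm, rfl⟩
    rw [Finset.mem_range] at hm
    rw [pmk_coe]
    omega
  · intro hk
    have h1 : 1 ≤ (k : ℕ) := k.2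
    refine ⟨(k : ℕ) - 1, ?_, ?_⟩
    · rw [Finset.mem_range]; omega
    · apply pnat_eq_nat.mpr
      rw [pmk_coe]; omega

lemma single_add_sub (n : ℕ) {k : ℕ+} (hk : (k : ℕ) < n) :
    Finsupp.single k 1 + (dvec n - Finsupp.single k 1) = dvec n := by
  ext j
  rw [Finsupp.add_apply, Finsupp.tsub_apply]
  by_cases h : j = k
  · subst h
    rw [Finsupp.single_eq_same, dvec_apply]
    have : 1 ≤ (j : ℕ) := j.2
    omega
  · rw [Finsupp.single_eq_of_ne' (show k ≠ j from fun hc => h hc.symm)]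
    omega

lemma single_succ_add_sub (n : ℕ) {k : ℕ+} (hk : (k : ℕ) < n) :
    Finsupp.single (k + 1) 1 + (dvec n - Finsupp.single k 1)
      = (dvec n).mapDomain (Equiv.swap k (k + 1) : ℕ+ → ℕ+) := by
  ext j
  rw [Finsupp.add_apply, Finsupp.tsub_apply]
  rw [show ((Equiv.swap k (k + 1) : ℕ+ → ℕ+) : ℕ+ → ℕ+) = ⇑(Equiv.swap k (k+1)) from rfl]
  rw [Finsupp.mapDomain_equiv_apply, Equiv.symm_swap]
  have hk1 : 1 ≤ (k : ℕ) := k.2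
  by_cases h1 : j = k
  · subst h1
    rw [Equiv.swap_apply_left, Finsupp.single_eq_of_ne' (show j + 1 ≠ j from Ne.symm (pnat_ne_succ j)),
      Finsupp.single_eq_same, dvec_apply, dvec_apply, pnat_add_one_coe]
    omega
  · by_cases h2 : j = k + 1
    · subst h2
      rw [Equiv.swap_apply_right, Finsupp.single_eq_same,
        Finsupp.single_eq_of_ne' (show k ≠ k + 1 from pnat_ne_succ k), dvec_apply, dvec_apply,
        pnat_add_one_coe]
      omega
    · rw [Equiv.swap_apply_of_ne_of_ne h1 h2,
        Finsupp.single_eq_of_ne' (show k + 1 ≠ j from fun hc => h2 hc.symm),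
        Finsupp.single_eq_of_ne' (show k ≠ j from fun hc => h1 hc.symm)]
      omega

lemma base_identity (n : ℕ) {k : ℕ+} (hk : (k : ℕ) < n) :
    (X k - X (k + 1)) * Bmon n k
      = monomial (dvec n) 1
        - rename (Equiv.swap k (k + 1) : ℕ+ → ℕ+) (monomial (dvec n) (1 : ℤ)) := by
  unfold Bmon
  rw [sub_mul, rename_monomial]
  congr 1
  · rw [X, monomial_mul, one_mul, single_add_sub n hk]
  · rw [X, monomial_mul, one_mul, single_succ_add_sub n hk]


lemma w0_desc {n : ℕ} {k : ℕ+} (hk : (k : ℕ) < n) :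
    len (w0 n * r k) + 1 = len (w0 n) := by
  apply len_mul_r_desc (suppIn_fs (suppIn_w0 n))
  show ((w0 n (k + 1) : ℕ)) < ((w0 n k : ℕ))
  rw [w0_coe, w0_coe, pnat_add_one_coe, if_pos (by omega), if_pos (by omega)]
  have : 1 ≤ (k : ℕ) := k.2
  omega

lemma w0_left_desc_iff (n : ℕ) (j : ℕ+) :
    (len (r j * w0 n) + 1 = len (w0 n)) ↔ (j : ℕ) < n := by
  rw [len_r_mul_desc_iff (suppIn_fs (suppIn_w0 n)), w0_inv]
  have h1 : 1 ≤ (j : ℕ) := j.2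
  constructor
  · intro h
    by_contra hc
    push_neg at hc
    have h' : ((w0 n (j + 1) : ℕ)) < ((w0 n j : ℕ)) := h
    rw [w0_coe, w0_coe, pnat_add_one_coe, if_neg (by omega)] at h'
    split_ifs at h' <;> omega
  · intro h
    show ((w0 n (j + 1) : ℕ)) < ((w0 n j : ℕ))
    rw [w0_coe, w0_coe, pnat_add_one_coe, if_pos (by omega), if_pos (by omega)]
    omega

lemma r_mul_w0 {n : ℕ} {j k : ℕ+} (hj : (j : ℕ) < n) (hk : (k : ℕ) = n - (j : ℕ)) :
    r j * w0 n = w0 n * r k := by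
  have h1 : 1 ≤ (j : ℕ) := j.2
  ext x
  apply pnat_eq_nat.mpr
  show ((r j (w0 n x) : ℕ)) = ((w0 n (r k x) : ℕ))
  have hx : 1 ≤ (x : ℕ) := x.2
  simp only [r_coe, w0_coe, pnat_add_one_coe, hk]
  split_ifs <;> omega


lemma nabla_staircase (n : ℕ) :
    nabla (monomial (dvec n) (1 : ℤ))
      = ∑ k ∈ Tn n, monomial (dvec n - Finsupp.single k 1) ((dvec n k : ℤ)) := by
  unfold nabla
  have hsub : (Function.support fun k : ℕ+ => pderiv k (monomial (dvec n) (1 : ℤ)))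
      ⊆ ↑(Tn n) := by
    intro k hk
    rw [Function.mem_support] at hk
    rw [Finset.mem_coe, mem_Tn]
    by_contra hc
    push_neg at hc
    apply hk
    rw [pderiv_monomial, dvec_apply]
    rw [show n - (k : ℕ) = 0 by omega]
    rw [show ((1 : ℤ) * ((0 : ℕ) : ℤ)) = 0 by norm_num]
    exact map_zero _
  rw [finsum_eq_sum_of_support_subset _ hsub]
  apply Finset.sum_congr rfl
  intro k hk
  rw [pderiv_monomial, one_mul]

section BaseCase

variable (SP : Equiv.Perm ℕ+ → MvPolynomial ℕ+ ℤ)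
variable (hSP1 : ∀ n : ℕ, SP (w0 n)
      = ∏ i ∈ Finset.range n, (X (⟨i + 1, Nat.succ_pos i⟩ : ℕ+) : MvPolynomial ℕ+ ℤ) ^ (n - 1 - i))
variable (hrec : ∀ π : Equiv.Perm ℕ+, FinitelySupported π → ∀ i : ℕ+,
      len (π * simpleTransposition i) + 1 = len π →
      (X i - X (i + 1)) * SP (π * simpleTransposition i)
        = SP π - rename (Equiv.swap i (i + 1) : ℕ+ → ℕ+) (SP π))

include hSP1 hrec

lemma SP_w0_r (n : ℕ) {k : ℕ+} (hk : (k : ℕ) < n) : SP (w0 n * r k) = Bmon n k := by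
  apply SP_unique SP hrec (suppIn_fs (suppIn_w0 n)) (w0_desc hk)
  rw [hSP1 n, staircase_eq_monomial n]
  exact base_identity n hk

lemma base_case (n : ℕ) :
    nabla (SP (w0 n)) = ∑ᶠ j : ℕ+,
      if len (r j * w0 n) + 1 = len (w0 n)
      then ((j : ℕ) : ℤ) • SP (r j * w0 n) else 0 := by
  have hSPw0 : SP (w0 n) = monomial (dvec n) 1 := (hSP1 n).trans (staircase_eq_monomial n)
  have hRsupp : (Function.support fun j : ℕ+ =>
      if len (r j * w0 n) + 1 = len (w0 n)
      then ((j : ℕ) : ℤ) • SP (r j * w0 n) else 0) ⊆ ↑(Tn n) := by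
    intro j hj
    rw [Function.mem_support] at hj
    rw [Finset.mem_coe, mem_Tn]
    by_contra hc
    apply hj
    rw [if_neg]
    rw [w0_left_desc_iff]
    exact hc
  rw [hSPw0, nabla_staircase n, finsum_eq_sum_of_support_subset _ hRsupp]
  unfold Tn
  rw [Finset.sum_image (fun x _ y _ h => pmk_inj h), Finset.sum_image (fun x _ y _ h => pmk_inj h)]
  rw [← Finset.sum_range_reflect]
  apply Finset.sum_congr rfl
  intro m hm
  rw [Finset.mem_range] at hm
  -- left term
  have hmlt : (pmk (n - 1 - 1 - m) : ℕ) < n := by rw [pmk_coe]; omega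
  have hd : dvec n (pmk (n - 1 - 1 - m)) = m + 1 := by
    rw [dvec_apply, pmk_coe]; omega
  have hlhs : monomial (dvec n - Finsupp.single (pmk (n - 1 - 1 - m)) 1)
      ((dvec n (pmk (n - 1 - 1 - m)) : ℤ))
      = (((m + 1 : ℕ)) : ℤ) • Bmon n (pmk (n - 1 - 1 - m)) := by
    rw [hd]
    unfold Bmon
    rw [smul_monomial, smul_eq_mul, mul_one]
  rw [hlhs]
  -- right term
  have hjlt : (pmk m : ℕ) < n := by rw [pmk_coe]; omega
  have hcond : len (r (pmk m) * w0 n) + 1 = len (w0 n) := (w0_left_desc_iff n (pmk m)).mpr hjlt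
  rw [if_pos hcond]
  have hrw : r (pmk m) * w0 n = w0 n * r (pmk (n - 1 - 1 - m)) :=
    r_mul_w0 hjlt (by rw [pmk_coe, pmk_coe]; omega)
  rw [hrw, SP_w0_r SP hSP1 hrec n hmlt, pmk_coe]

end BaseCase


/-! ### The inductive step -/

lemma Rsupport_finite (SP : Equiv.Perm ℕ+ → MvPolynomial ℕ+ ℤ) {σ : Equiv.Perm ℕ+}
    (hfs : FinitelySupported σ) :
    (Function.support fun j : ℕ+ =>
      if len (r j * σ) + 1 = len σ then ((j : ℕ) : ℤ) • SP (r j * σ) else 0).Finite := by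
  obtain ⟨N, hN⟩ := exists_bound hfs
  apply Set.Finite.subset (Set.finite_Iic N)
  intro j hj
  rw [Function.mem_support] at hj
  rw [Set.mem_Iic]
  by_contra hc
  push_neg at hc
  apply hj
  rw [if_neg]
  rw [len_r_mul_desc_iff hfs]
  have h1 : σ⁻¹ j = j := by
    have hx := hN j hc
    nth_rewrite 1 [← hx]
    rw [perm_inv_apply_self]
  have h2 : σ⁻¹ (j + 1) = j + 1 := by
    have hlt : N < j + 1 := lt_trans hc (pnat_lt_succ j)
    have hx := hN (j + 1) hlt
    nth_rewrite 1 [← hx]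
    rw [perm_inv_apply_self]
  rw [h1, h2]
  exact not_lt_of_gt (pnat_lt_succ j)

section StepSection

variable (SP : Equiv.Perm ℕ+ → MvPolynomial ℕ+ ℤ)
variable (hrec : ∀ π : Equiv.Perm ℕ+, FinitelySupported π → ∀ i : ℕ+,
      len (π * simpleTransposition i) + 1 = len π →
      (X i - X (i + 1)) * SP (π * simpleTransposition i)
        = SP π - rename (Equiv.swap i (i + 1) : ℕ+ → ℕ+) (SP π))

include hrec

lemma step (π : Equiv.Perm ℕ+) (hfs : FinitelySupported π) (i : ℕ+) (hasc : π i < π (i + 1))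
    (hQ : nabla (SP (π * r i)) = ∑ᶠ j : ℕ+,
      if len (r j * (π * r i)) + 1 = len (π * r i)
      then ((j : ℕ) : ℤ) • SP (r j * (π * r i)) else 0) :
    nabla (SP π) = ∑ᶠ j : ℕ+,
      if len (r j * π) + 1 = len π then ((j : ℕ) : ℤ) • SP (r j * π) else 0 := by
  set c' : ℕ+ → MvPolynomial ℕ+ ℤ := fun j =>
    if len (r j * (π * r i)) + 1 = len (π * r i)
    then ((j : ℕ) : ℤ) • SP (r j * (π * r i)) else 0 with hc'
  set c : ℕ+ → MvPolynomial ℕ+ ℤ := fun j =>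
    if len (r j * π) + 1 = len π then ((j : ℕ) : ℤ) • SP (r j * π) else 0 with hc
  have hfs' : FinitelySupported (π * r i) := fs_mul hfs (fs_r i)
  have hlenasc : len (π * r i) = len π + 1 := len_mul_r_asc hfs hasc
  have hdesc' : len ((π * r i) * r i) + 1 = len (π * r i) := by
    rw [mul_r_mul_r]; omega
  have hkey := hrec (π * r i) hfs' i hdesc'
  rw [mul_r_mul_r] at hkey
  -- pointwise claim
  have hpt : ∀ j : ℕ+, c' j - rename (Equiv.swap i (i + 1) : ℕ+ → ℕ+) (c' j)
      = (X i - X (i + 1)) * c j := by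
    intro j
    by_cases hj' : len (r j * (π * r i)) + 1 = len (π * r i)
    · have hfsσ : FinitelySupported (r j * (π * r i)) := fs_mul (fs_r j) hfs'
      have hσr : (r j * (π * r i)) * r i = r j * π := by
        rw [mul_assoc, mul_assoc, r_mul_self, mul_one]
      rcases lt_trichotomy ((r j * (π * r i)) i) ((r j * (π * r i)) (i + 1)) with hA | hA | hA
      · -- ascent of σ at i : both terms vanish
        have hinv := asc_invariant SP hrec hfsσ hA
        have hlenrj : len (r j * π) = len (π * r i) := by
          rw [← hσr]
          rw [len_mul_r_asc hfsσ hA]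
          omega
        have hcondc : ¬(len (r j * π) + 1 = len π) := by omega
        rw [hc', hc]
        simp only [if_pos hj', if_neg hcondc]
        rw [map_zsmul, hinv, sub_self, mul_zero]
      · exact absurd ((r j * (π * r i)).injective hA) (pnat_ne_succ i)
      · -- descent of σ at i
        have hlen2 : len ((r j * (π * r i)) * r i) + 1 = len (r j * (π * r i)) :=
          len_mul_r_desc hfsσ hA
        have hcondc : len (r j * π) + 1 = len π := by
          rw [← hσr]
          omega
        have heq := hrec (r j * (π * r i)) hfsσ i hlen2
        rw [hσr] at heq
        rw [hc', hc]
        simp only [if_pos hj', if_pos hcondc]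
        rw [map_zsmul, ← smul_sub, ← heq, mul_smul_comm]
    · have hcondc : ¬(len (r j * π) + 1 = len π) := by
        intro hcond
        apply hj'
        have hd : π⁻¹ (j + 1) < π⁻¹ j := (len_r_mul_desc_iff hfs).mp hcond
        rw [len_r_mul_desc_iff hfs']
        have hinv : (π * r i)⁻¹ = r i * π⁻¹ := by rw [mul_inv_rev, r_inv]
        have e1 : (π * r i)⁻¹ j = r i (π⁻¹ j) := by rw [hinv]; rfl
        have e2 : (π * r i)⁻¹ (j + 1) = r i (π⁻¹ (j + 1)) := by rw [hinv]; rfl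
        rw [e1, e2]
        apply r_lt_r hd
        rintro ⟨hu, hv⟩
        -- π⁻¹ (j+1) = i and π⁻¹ j = i + 1
        have hπi : π i = j + 1 := by rw [← hu, perm_apply_inv_self]
        have hπi1 : π (i + 1) = j := by rw [← hv, perm_apply_inv_self]
        rw [hπi, hπi1] at hasc
        exact absurd hasc (not_lt_of_gt (pnat_lt_succ j))
      rw [hc', hc]
      simp only [if_neg hj', if_neg hcondc]
      rw [map_zero, sub_zero, mul_zero]
  -- assemble
  have hfin' : (Function.support c').Finite := Rsupport_finite SP hfs'
  have hfinc : (Function.support c).Finite := Rsupport_finite SP hfs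
  have hfin'' : (Function.support fun j => rename (Equiv.swap i (i + 1) : ℕ+ → ℕ+) (c' j)).Finite := by
    apply Set.Finite.subset hfin'
    intro j hj
    rw [Function.mem_support] at hj ⊢
    intro hzero
    exact hj (by rw [hzero, map_zero])
  have hnab := congrArg nabla hkey
  rw [nabla_Xsub_mul, nabla_sub, nabla_rename, hQ] at hnab
  have hmap : rename (Equiv.swap i (i + 1) : ℕ+ → ℕ+) (∑ᶠ j : ℕ+, c' j)
      = ∑ᶠ j : ℕ+, rename (Equiv.swap i (i + 1) : ℕ+ → ℕ+) (c' j) :=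
    AddMonoidHom.map_finsum
      (AddMonoidHom.mk' (fun p => rename (Equiv.swap i (i + 1) : ℕ+ → ℕ+) p)
        (fun a b => map_add (rename (R := ℤ) (Equiv.swap i (i + 1) : ℕ+ → ℕ+)) a b)) hfin'
  rw [hmap, ← finsum_sub_distrib hfin' hfin'', finsum_congr hpt,
    ← mul_finsum _ _] at hnab
  exact mul_left_cancel₀ (X_sub_ne i) hnab

end StepSection


section MainSection

variable (SP : Equiv.Perm ℕ+ → MvPolynomial ℕ+ ℤ)
variable (hSP1 : ∀ n : ℕ, SP (w0 n)
      = ∏ i ∈ Finset.range n, (X (⟨i + 1, Nat.succ_pos i⟩ : ℕ+) : MvPolynomial ℕ+ ℤ) ^ (n - 1 - i))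
variable (hrec : ∀ π : Equiv.Perm ℕ+, FinitelySupported π → ∀ i : ℕ+,
      len (π * simpleTransposition i) + 1 = len π →
      (X i - X (i + 1)) * SP (π * simpleTransposition i)
        = SP π - rename (Equiv.swap i (i + 1) : ℕ+ → ℕ+) (SP π))

include hSP1 hrec

lemma main_aux : ∀ (k n : ℕ) (π : Equiv.Perm ℕ+), SuppIn n π →
    invnum (w0 n) ≤ invnum π + k →
    nabla (SP π) = ∑ᶠ j : ℕ+,
      if len (r j * π) + 1 = len π then ((j : ℕ) : ℤ) • SP (r j * π) else 0 := by
  intro k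
  induction k with
  | zero =>
    intro n π hsupp hbound
    have hw : π = w0 n := by
      apply eq_w0_of_no_asc hsupp
      rintro ⟨i, hi, hia⟩
      have h1 := invnum_mul_r_asc (suppIn_fs hsupp) hia
      have h2 := invnum_le_w0 (suppIn_mul_r hsupp hi)
      omega
    rw [hw]
    exact base_case SP hSP1 hrec n
  | succ k ih =>
    intro n π hsupp hbound
    by_cases hasc : ∃ i : ℕ+, (i : ℕ) < n ∧ π i < π (i + 1)
    · obtain ⟨i, hi, hia⟩ := hasc
      have h1 := invnum_mul_r_asc (suppIn_fs hsupp) hia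
      exact step SP hrec π (suppIn_fs hsupp) i hia
        (ih n (π * r i) (suppIn_mul_r hsupp hi) (by omega))
    · rw [eq_w0_of_no_asc hsupp hasc]
      exact base_case SP hSP1 hrec n

theorem main (π : Equiv.Perm ℕ+) (hπ : FinitelySupported π) :
    nabla (SP π) = ∑ᶠ j : ℕ+,
      if len (r j * π) + 1 = len π then ((j : ℕ) : ℤ) • SP (r j * π) else 0 := by
  obtain ⟨N, hN⟩ := exists_bound hπ
  have hsupp : SuppIn (N : ℕ) π := fun i hi => hN i hi
  exact main_aux SP hSP1 hrec (invnum (w0 (N : ℕ))) (N : ℕ) π hsupp (by omega)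

end MainSection

end SchubertAux

/-- `∇ S_π = Σ_{i ≥ 1, ℓ(rᵢπ) = ℓ(π) − 1} i · S_{rᵢπ}`; in particular `∇` takes Schubert
polynomials to nonnegative integer combinations of Schubert polynomials. -/
theorem nabla_schubert
    (SP : Equiv.Perm ℕ+ → MvPolynomial ℕ+ ℤ) (hSP : IsSchubertFamily SP)
    (π : Equiv.Perm ℕ+) (hπ : FinitelySupported π) :
    nabla (SP π)
      = ∑ᶠ i : ℕ+,
          if len (simpleTransposition i * π) + 1 = len π
          then ((i : ℕ) : ℤ) • SP (simpleTransposition i * π) else 0 := by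
  obtain ⟨h1, h2⟩ := hSP
  exact SchubertAux.main SP h1 h2 π hπ
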